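/- arXiv:cond-mat/0701236 — 2 statements merged into one kernel-verified Lean document; each statement's English description precedes it below -/
import Mathlib

section
/- If x^L = (a/(γk))^(1/(k−1)) > (k−1)/V, then f^L(x^L) ≤ sup_{x ∈ [(k−1)/V, ∞)} f_V(x) ≤ f^U_V(x^U_V). -/
open Set Finset

/-- Tangent line inequality for x^k at s, on nonneg reals. -/
lemma tangent_aux (s y : ℝ) (hs : 0 ≤ s) (hy : 0 ≤ y) (k : ℕ) :
    (k : ℝ) * s ^ (k - 1) * (y - s) ≤ y ^ k - s ^ k := by
  have hgeom : (∑ i ∈ Finset.range k, y ^ i * s ^ (k - 1 - i)) * (y - s) = y ^ k - s ^ k :=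
    geom_sum₂_mul y s k
  have hconst : ∀ i ∈ Finset.range k, s ^ i * s ^ (k - 1 - i) = s ^ (k - 1) := by
    intro i hi
    rw [Finset.mem_range] at hi
    rw [← pow_add]
    congr 1
    omega
  have hsum_const : (∑ i ∈ Finset.range k, s ^ i * s ^ (k - 1 - i)) = (k : ℝ) * s ^ (k - 1) := by
    rw [Finset.sum_congr rfl hconst, Finset.sum_const, Finset.card_range, nsmul_eq_mul]
  rcases le_total s y with h | h
  · rw [← hgeom]
    have hle : (k : ℝ) * s ^ (k - 1) ≤ ∑ i ∈ Finset.range k, y ^ i * s ^ (k - 1 - i) := by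
      rw [← hsum_const]
      apply Finset.sum_le_sum
      intro i _
      exact mul_le_mul_of_nonneg_right (pow_le_pow_left₀ hs h i) (pow_nonneg hs _)
    exact mul_le_mul_of_nonneg_right hle (sub_nonneg.2 h)
  · rw [← hgeom]
    have hle : (∑ i ∈ Finset.range k, y ^ i * s ^ (k - 1 - i)) ≤ (k : ℝ) * s ^ (k - 1) := by
      rw [← hsum_const]
      apply Finset.sum_le_sum
      intro i _
      exact mul_le_mul_of_nonneg_right (pow_le_pow_left₀ hy h i) (pow_nonneg hs _)
    have := mul_le_mul_of_nonpos_right hle (sub_nonpos.2 h)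
    linarith

theorem stmt4 (a γ V : ℝ) (ha : 0 < a) (hγ : 0 < γ) (hV : 0 < V) (k : ℕ) (hk : 2 ≤ k)
    (fV : ℝ → ℝ) (hfV : ∀ x, fV x = a * x - γ * ∏ j ∈ Finset.range k, (x - j / V))
    (fL : ℝ → ℝ) (hfL : ∀ x, fL x = a * x - γ * x ^ k)
    (fU : ℝ → ℝ) (hfU : ∀ x, fU x = a * x - γ * (x - (k - 1) / V) ^ k)
    (xL : ℝ) (hxL : xL = (a / (γ * k)) ^ ((1 : ℝ) / (k - 1)))
    (xU : ℝ) (hxU : xU = xL + (k - 1) / V)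
    (hbig : (k - 1) / V < xL) :
    fL xL ≤ sSup (fV '' Set.Ici ((k - 1) / V)) ∧
    sSup (fV '' Set.Ici ((k - 1) / V)) ≤ fU xU := by
  set c : ℝ := ((k : ℝ) - 1) / V with hc
  have hk1 : (1 : ℝ) ≤ (k : ℝ) - 1 := by
    have : (2 : ℝ) ≤ (k : ℝ) := by exact_mod_cast hk
    linarith
  have hc0 : 0 ≤ c := div_nonneg (by linarith) hV.le
  have hxL0 : 0 < xL := lt_of_le_of_lt hc0 hbig
  -- key power identity
  have hγk : (0 : ℝ) < γ * k := by positivity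
  have hpow : xL ^ (k - 1) = a / (γ * k) := by
    have hbase : (0 : ℝ) < a / (γ * k) := div_pos ha hγk
    have hcast : ((k - 1 : ℕ) : ℝ) = (k : ℝ) - 1 := by
      have : 1 ≤ k := by omega
      push_cast [Nat.cast_sub this]; ring
    rw [hxL, ← Real.rpow_natCast ((a / (γ * k)) ^ ((1 : ℝ) / (k - 1))) (k - 1),
      ← Real.rpow_mul hbase.le, hcast, one_div, inv_mul_cancel₀ (by linarith), Real.rpow_one]
  have ha' : a = γ * k * xL ^ (k - 1) := by
    rw [hpow, mul_div_assoc', eq_div_iff hγk.ne']; ring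
  have hxLk : xL ^ (k - 1) * xL = xL ^ k := by
    rw [← pow_succ]
    congr 1
    omega
  -- maximization: for y ≥ 0, a*y - γ*y^k ≤ a*xL - γ*xL^k
  have hmax : ∀ y : ℝ, 0 ≤ y → a * y - γ * y ^ k ≤ a * xL - γ * xL ^ k := by
    intro y hy
    have ht := tangent_aux xL y hxL0.le hy k
    nlinarith [mul_le_mul_of_nonneg_left ht hγ.le]
  -- product bounds for x ≥ c
  have hprod_lower : ∀ x : ℝ, c ≤ x →
      (x - c) ^ k ≤ ∏ j ∈ Finset.range k, (x - (j : ℝ) / V) := by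
    intro x hx
    calc (x - c) ^ k = ∏ _j ∈ Finset.range k, (x - c) := by
          rw [Finset.prod_const, Finset.card_range]
      _ ≤ ∏ j ∈ Finset.range k, (x - (j : ℝ) / V) := by
          apply Finset.prod_le_prod
          · intro i _; linarith
          · intro i hi
            rw [Finset.mem_range] at hi
            have : (i : ℝ) ≤ (k : ℝ) - 1 := by
              have : (i : ℝ) + 1 ≤ (k : ℝ) := by exact_mod_cast hi
              linarith
            have : (i : ℝ) / V ≤ c := by
              rw [hc]; gcongr
            linarith
  have hprod_upper : ∀ x : ℝ, c ≤ x →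
      (∏ j ∈ Finset.range k, (x - (j : ℝ) / V)) ≤ x ^ k := by
    intro x hx
    calc (∏ j ∈ Finset.range k, (x - (j : ℝ) / V)) ≤ ∏ _j ∈ Finset.range k, x := by
          apply Finset.prod_le_prod
          · intro i hi
            rw [Finset.mem_range] at hi
            have h1 : (i : ℝ) ≤ (k : ℝ) - 1 := by
              have : (i : ℝ) + 1 ≤ (k : ℝ) := by exact_mod_cast hi
              linarith
            have h2 : (i : ℝ) / V ≤ c := by rw [hc]; gcongr
            linarith
          · intro i _
            have : (0 : ℝ) ≤ (i : ℝ) / V := by positivity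
            linarith
      _ = x ^ k := by rw [Finset.prod_const, Finset.card_range]
  -- pointwise upper bound
  have hub : ∀ z ∈ fV '' Set.Ici c, z ≤ fU xU := by
    rintro z ⟨x, hx, rfl⟩
    rw [Set.mem_Ici] at hx
    have h1 : fV x ≤ a * x - γ * (x - c) ^ k := by
      rw [hfV x]
      have := hprod_lower x hx
      nlinarith
    have h2 : a * x - γ * (x - c) ^ k ≤ fU xU := by
      rw [hfU, hxU]
      have hxc : 0 ≤ x - c := by linarith
      have := hmax (x - c) hxc
      have hsimp : xL + ((k : ℝ) - 1) / V - ((k : ℝ) - 1) / V = xL := by ring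
      rw [hsimp]
      linarith
    linarith
  have hbdd : BddAbove (fV '' Set.Ici c) := ⟨fU xU, hub⟩
  have hmem : fV xL ∈ fV '' Set.Ici c := ⟨xL, Set.mem_Ici.2 hbig.le, rfl⟩
  constructor
  · have hlow : fL xL ≤ fV xL := by
      rw [hfL, hfV]
      have := hprod_upper xL hbig.le
      nlinarith
    exact hlow.trans (le_csSup hbdd hmem)
  · exact csSup_le ⟨fV xL, hmem⟩ hub
end

section
/- As V → ∞, the supremum over [0,∞) of f_V satisfies limsup_{V→∞} sup_{x ≥ 0} f_V(x) ≤ f^L(x^L) = (a/(kγ))^(1/(k−1)) · a · (k−1)/k, where a = (μ − λ(0))_+. -/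
open Set Finset Filter

lemma key6 (a γ : ℝ) (ha : 0 ≤ a) (hγ : 0 < γ) (k : ℕ) (hk : 2 ≤ k) (y : ℝ) (hy : 0 ≤ y) :
    a * y - γ * y ^ k ≤ (a / (k * γ)) ^ ((1 : ℝ) / (k - 1)) * a * (k - 1) / k := by
  have hK : (2:ℝ) ≤ (k:ℝ) := by exact_mod_cast hk
  have hK0 : (0:ℝ) < k := by linarith
  have hK1 : (k:ℝ) - 1 ≠ 0 := by linarith
  rcases eq_or_lt_of_le ha with rfl | hapos
  · have : (0:ℝ) / (k*γ) = 0 := by ring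
    have hy' : 0 ≤ γ * y ^ k := by positivity
    simp only [zero_mul, zero_sub, mul_zero, zero_div]
    linarith
  · set t : ℝ := (a / (k * γ)) ^ ((1 : ℝ) / (k - 1)) with ht
    have hbase : 0 < a / (k * γ) := by positivity
    have htpos : 0 < t := Real.rpow_pos_of_pos hbase _
    have htk1 : t ^ (k - 1) = a / (k * γ) := by
      rw [ht, ← Real.rpow_natCast (_ ^ _) (k-1), ← Real.rpow_mul hbase.le]
      have : (1:ℝ) / ((k:ℝ) - 1) * ((k-1 : ℕ):ℝ) = 1 := by
        have : ((k-1 : ℕ):ℝ) = (k:ℝ) - 1 := by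
          have : 1 ≤ k := by omega
          push_cast [this]; ring
        rw [this]; field_simp
      rw [this, Real.rpow_one]
    have ha_eq : a = (k:ℝ) * γ * t ^ (k - 1) := by
      field_simp at htk1
      linarith [htk1]
    -- Bernoulli
    set u : ℝ := y / t - 1 with hu
    have hyu : y = t * (1 + u) := by
      have e : t * (y / t) = y := by field_simp
      rw [hu]; linear_combination -e
    have hber : 1 + (k:ℝ) * u ≤ (1 + u) ^ k := by
      apply one_add_mul_le_pow
      have h0 : 0 ≤ y / t := by positivity
      rw [hu]; linarith
    have htk : t ^ k = t ^ (k-1) * t := by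
      rw [← pow_succ]; congr 1; omega
    have hykk : t ^ k + (k:ℝ) * t ^ (k-1) * (y - t) ≤ y ^ k := by
      have h1 : t ^ k * (1 + (k:ℝ)*u) ≤ t ^ k * (1+u)^k :=
        mul_le_mul_of_nonneg_left hber (by positivity)
      have h2 : y ^ k = t ^ k * (1+u)^k := by rw [hyu, mul_pow]
      have h3 : t ^ k * u = t ^ (k-1) * (y - t) := by
        rw [htk, hu]; field_simp
      nlinarith [h1]
    have hmain : a * y - γ * y ^ k ≤ a * t - γ * t ^ k := by
      have := mul_le_mul_of_nonneg_left hykk hγ.le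
      nlinarith [this]
    have hfin : a * t - γ * t ^ k = t * a * ((k:ℝ) - 1) / k := by
      rw [htk, ha_eq]; field_simp
    linarith [hmain, hfin.le.trans (le_refl _)]

theorem stmt6 (a γ : ℝ) (ha : 0 ≤ a) (hγ : 0 < γ) (k : ℕ) (hk : 2 ≤ k)
    (fV : ℝ → ℝ → ℝ)
    (hfV : ∀ V x, fV V x = a * x - γ * ∏ j ∈ Finset.range k, (x - j / V)) :
    Filter.limsup (fun V : ℝ => sSup (fV V '' Set.Ici (0 : ℝ))) Filter.atTop ≤
      (a / (k * γ)) ^ ((1 : ℝ) / (k - 1)) * a * (k - 1) / k := by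
  have hK : (2:ℝ) ≤ (k:ℝ) := by exact_mod_cast hk
  set M : ℝ := (a / (k * γ)) ^ ((1 : ℝ) / (k - 1)) * a * (k - 1) / k with hM
  have hM0 : 0 ≤ M := by
    rw [hM]
    have h1 : (0:ℝ) ≤ (a / (k * γ)) ^ ((1 : ℝ) / (k - 1)) :=
      Real.rpow_nonneg (by positivity) _
    have h2 : (0:ℝ) ≤ (k:ℝ) - 1 := by linarith
    have h3 : (0:ℝ) < (k:ℝ) := by linarith
    positivity
  set c : ℝ → ℝ := fun V => ((k:ℝ) - 1) / V with hc
  set bound : ℝ → ℝ := fun V => M + a * c V + γ * (c V) ^ k with hbound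
  have hjv' : ∀ V : ℝ, 0 < V → ∀ j ∈ Finset.range k, (j:ℝ)/V ∈ Set.Icc 0 (c V) := by
    intro V hV j hj
    simp only [Finset.mem_range] at hj
    have hjk : (j:ℝ) + 1 ≤ (k:ℝ) := by exact_mod_cast hj
    constructor
    · exact div_nonneg (Nat.cast_nonneg j) hV.le
    · show (j:ℝ)/V ≤ ((k:ℝ)-1)/V
      gcongr
      linarith
  -- pointwise bound
  have hpt : ∀ V : ℝ, 0 < V → ∀ x : ℝ, 0 ≤ x → fV V x ≤ bound V := by
    intro V hV x hx
    have hc0 : 0 ≤ c V := div_nonneg (by linarith) hV.le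
    have hjv := hjv' V hV
    rw [hfV]
    rcases le_total x (c V) with hxc | hxc
    · -- small x
      have habs : |∏ j ∈ Finset.range k, (x - (j:ℝ)/V)| ≤ (c V) ^ k := by
        rw [Finset.abs_prod]
        calc ∏ j ∈ Finset.range k, |x - (j:ℝ)/V| ≤ ∏ _j ∈ Finset.range k, c V := by
              apply Finset.prod_le_prod
              · intro i _; positivity
              · intro i hi
                obtain ⟨h1, h2⟩ := hjv i hi
                rw [abs_le]; constructor <;> linarith
          _ = (c V) ^ k := by rw [Finset.prod_const, Finset.card_range]
      have hP : -((c V)^k) ≤ ∏ j ∈ Finset.range k, (x - (j:ℝ)/V) := by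
        have := neg_abs_le (∏ j ∈ Finset.range k, (x - (j:ℝ)/V))
        linarith
      have h1 : a * x ≤ a * c V := mul_le_mul_of_nonneg_left hxc ha
      have h2 : -(γ * ∏ j ∈ Finset.range k, (x - (j:ℝ)/V)) ≤ γ * (c V)^k := by
        nlinarith [hP, hγ.le]
      rw [hbound]; dsimp only; linarith
    · -- large x
      have hprod : (x - c V) ^ k ≤ ∏ j ∈ Finset.range k, (x - (j:ℝ)/V) := by
        have hrw : (x - c V)^k = ∏ _j ∈ Finset.range k, (x - c V) := by
          rw [Finset.prod_const, Finset.card_range]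
        rw [hrw]
        apply Finset.prod_le_prod
        · intro i _; linarith
        · intro i hi
          obtain ⟨h1, h2⟩ := hjv i hi
          linarith
      have hkey := key6 a γ ha hγ k hk (x - c V) (by linarith)
      have h2 : γ * (x - c V)^k ≤ γ * ∏ j ∈ Finset.range k, (x - (j:ℝ)/V) :=
        mul_le_mul_of_nonneg_left hprod hγ.le
      have h3 : 0 ≤ γ * (c V)^k := mul_nonneg hγ.le (pow_nonneg hc0 k)
      rw [hbound]; dsimp only
      have : a * x - γ * (x - c V)^k ≤ M + a * c V := by
        have hax : a * x = a * (x - c V) + a * c V := by ring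
        rw [hax]; rw [← hM] at hkey; linarith
      linarith
  -- sSup bound, eventually
  have hev : ∀ᶠ V : ℝ in atTop, sSup (fV V '' Set.Ici (0:ℝ)) ≤ bound V := by
    filter_upwards [eventually_gt_atTop (0:ℝ)] with V hV
    apply Real.sSup_le
    · rintro z ⟨x, hx, rfl⟩
      exact hpt V hV x hx
    · have hc0 : 0 ≤ c V := div_nonneg (by linarith) hV.le
      have h1 : 0 ≤ γ * (c V)^k := mul_nonneg hγ.le (pow_nonneg hc0 k)
      have h2 : 0 ≤ a * c V := mul_nonneg ha hc0
      rw [hbound]; dsimp only; linarith [hM0]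
  -- bound tends to M
  have hctend : Tendsto c atTop (nhds 0) := by
    rw [hc]
    exact tendsto_const_nhds.div_atTop tendsto_id
  have hbtend : Tendsto bound atTop (nhds M) := by
    have h0k : (0:ℝ)^k = 0 := zero_pow (by omega)
    have h : Tendsto bound atTop (nhds (M + a * 0 + γ * (0:ℝ)^k)) := by
      apply Tendsto.add
      · exact Tendsto.add tendsto_const_nhds (tendsto_const_nhds.mul hctend)
      · exact tendsto_const_nhds.mul (hctend.pow k)
    simpa [h0k] using h
  have hbd : IsBoundedUnder (· ≤ ·) atTop bound := hbtend.isBoundedUnder_le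
  have hgb : IsBoundedUnder (· ≤ ·) atTop
      (fun V : ℝ => sSup (fV V '' Set.Ici (0:ℝ))) := by
    obtain ⟨b, hb⟩ := hbd
    refine ⟨b, ?_⟩
    rw [Filter.eventually_map] at hb ⊢
    filter_upwards [hev, hb] with V h1 h2
    exact h1.trans h2
  have hlow : ∀ᶠ V : ℝ in atTop,
      -(γ * ((k:ℝ)-1)^k) ≤ sSup (fV V '' Set.Ici (0:ℝ)) := by
    filter_upwards [eventually_ge_atTop (1:ℝ)] with V hV
    have hV0 : 0 < V := by linarith
    have hc0 : 0 ≤ c V := div_nonneg (by linarith) hV0.le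
    have hcK : c V ≤ (k:ℝ) - 1 := by
      show ((k:ℝ)-1)/V ≤ (k:ℝ) - 1
      calc ((k:ℝ)-1)/V ≤ ((k:ℝ)-1)/1 := by gcongr; linarith
        _ = (k:ℝ)-1 := by ring
    have hmem : fV V (c V) ∈ fV V '' Set.Ici (0:ℝ) := ⟨c V, hc0, rfl⟩
    have hbdd : BddAbove (fV V '' Set.Ici (0:ℝ)) := by
      refine ⟨bound V, ?_⟩
      rintro z ⟨x, hx, rfl⟩
      exact hpt V hV0 x hx
    have hle := le_csSup hbdd hmem
    have hval : -(γ * ((k:ℝ)-1)^k) ≤ fV V (c V) := by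
      rw [hfV]
      have habs : |∏ j ∈ Finset.range k, (c V - (j:ℝ)/V)| ≤ ((k:ℝ)-1) ^ k := by
        rw [Finset.abs_prod]
        calc ∏ j ∈ Finset.range k, |c V - (j:ℝ)/V|
            ≤ ∏ _j ∈ Finset.range k, ((k:ℝ)-1) := by
              apply Finset.prod_le_prod
              · intro i _; positivity
              · intro i hi
                obtain ⟨h1, h2⟩ := hjv' V hV0 i hi
                rw [abs_le]; constructor <;> linarith
          _ = ((k:ℝ)-1) ^ k := by rw [Finset.prod_const, Finset.card_range]
      have hP : (∏ j ∈ Finset.range k, (c V - (j:ℝ)/V)) ≤ ((k:ℝ)-1)^k :=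
        (le_abs_self _).trans habs
      have h2 : γ * (∏ j ∈ Finset.range k, (c V - (j:ℝ)/V)) ≤ γ * ((k:ℝ)-1)^k :=
        mul_le_mul_of_nonneg_left hP hγ.le
      have h1 : 0 ≤ a * c V := mul_nonneg ha hc0
      linarith
    linarith
  have hco : IsCoboundedUnder (· ≤ ·) atTop
      (fun V : ℝ => sSup (fV V '' Set.Ici (0:ℝ))) := by
    apply Filter.IsBoundedUnder.isCoboundedUnder_le
    refine ⟨-(γ * ((k:ℝ)-1)^k), ?_⟩
    rw [Filter.eventually_map]
    exact hlow
  calc Filter.limsup (fun V : ℝ => sSup (fV V '' Set.Ici (0:ℝ))) atTop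
      ≤ Filter.limsup bound atTop := Filter.limsup_le_limsup hev hco hbd
    _ = M := hbtend.limsup_eq
end
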